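/- Let n ≥ 2 be an integer. Regard R(T) = Z[L,L⁻¹] as a module over R = Z[L,L⁻¹]^W (W = Z/2 acting by L ↔ L⁻¹), which is free of rank 2 with basis {1, L}. The R-linear map R² → R(T) given by (a,b) ↦ a - Lⁿ·b is injective with cokernel isomorphic to R/(ρ_{n-1}), where ρ_{n-1} = L^{n-1}+L^{n-3}+...+L^{-(n-1)}. -/

import Mathlib

set_option synthInstance.maxHeartbeats 1000000
set_option maxHeartbeats 1600000
open LaurentPolynomial

/-- `ρ_k = L^k + L^{k-2} + ⋯ + L^{-k}` in `ℤ[L, L⁻¹]`. -/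
noncomputable def su2Char (k : ℕ) : LaurentPolynomial ℤ :=
  ∑ j ∈ Finset.range (k + 1), T ((k : ℤ) - 2 * j)

/-- The invariant subring `R = ℤ[L,L⁻¹]^W`, where the Weyl group `W = ℤ/2`
acts by exchanging `L` and `L⁻¹`: the equalizer of the inversion algebra
automorphism and the identity. -/
noncomputable def weylInvariants : Subalgebra ℤ (LaurentPolynomial ℤ) :=
  AlgHom.equalizer (invert.toAlgHom : LaurentPolynomial ℤ →ₐ[ℤ] LaurentPolynomial ℤ)
    (AlgHom.id ℤ (LaurentPolynomial ℤ))

/-- The `R`-linear map `R² → R(T) = ℤ[L,L⁻¹]`, `(a, b) ↦ a - Lⁿ·b`. -/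
noncomputable def mvMapSU2 (n : ℕ) :
    (weylInvariants × weylInvariants) →ₗ[weylInvariants] LaurentPolynomial ℤ where
  toFun p := (p.1 : LaurentPolynomial ℤ) - T (n : ℤ) * (p.2 : LaurentPolynomial ℤ)
  map_add' p q := by
    simp only [Prod.fst_add, Prod.snd_add]
    push_cast
    ring
  map_smul' c p := by
    have h1 : ((c • p).1 : LaurentPolynomial ℤ) = (c : LaurentPolynomial ℤ) * p.1 := rfl
    have h2 : ((c • p).2 : LaurentPolynomial ℤ) = (c : LaurentPolynomial ℤ) * p.2 := rfl
    have h3 : c • ((p.1 : LaurentPolynomial ℤ) - T (n : ℤ) * (p.2 : LaurentPolynomial ℤ))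
        = (c : LaurentPolynomial ℤ) * ((p.1 : LaurentPolynomial ℤ) - T (n : ℤ) * (p.2 : LaurentPolynomial ℤ)) := rfl
    simp only [RingHom.id_apply, h1, h2, h3]
    ring

lemma mem_weylInvariants_iff {x : LaurentPolynomial ℤ} :
    x ∈ weylInvariants ↔ invert x = x := Iff.rfl

noncomputable def dlt : LaurentPolynomial ℤ := T 1 - T (-1)

lemma dlt_ne_zero : dlt ≠ 0 := by
  intro h
  have := congrArg (fun f : LaurentPolynomial ℤ => f.coeff 1) h
  simp only [dlt] at this
  rw [show ((T 1 - T (-1) : LaurentPolynomial ℤ)).coeff 1 = (T 1 : LaurentPolynomial ℤ).coeff 1 - (T (-1) : LaurentPolynomial ℤ).coeff 1 from rfl] at this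
  simp at this

lemma dlt_mul_char (k : ℕ) : dlt * su2Char k = T ((k : ℤ) + 1) - T (-((k : ℤ) + 1)) := by
  have h : dlt * su2Char k
      = ∑ j ∈ Finset.range (k + 1),
          ((fun j : ℕ => (T ((k : ℤ) + 1 - 2 * j) : LaurentPolynomial ℤ)) j
            - (fun j : ℕ => (T ((k : ℤ) + 1 - 2 * j) : LaurentPolynomial ℤ)) (j + 1)) := by
    rw [su2Char, Finset.mul_sum]
    refine Finset.sum_congr rfl fun j _ => ?_
    simp only [dlt, sub_mul, ← T_add]
    push_cast
    ring_nf
  rw [h, Finset.sum_range_sub']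
  push_cast
  ring_nf

lemma T_sub_T_ne_zero {n : ℤ} (hn : n ≠ 0) : (T n : LaurentPolynomial ℤ) - T (-n) ≠ 0 := by
  intro h
  have := congrArg (fun f : LaurentPolynomial ℤ => f.coeff n) h
  rw [show ((T n - T (-n) : LaurentPolynomial ℤ)).coeff n
      = (T n : LaurentPolynomial ℤ).coeff n - (T (-n) : LaurentPolynomial ℤ).coeff n from
      rfl] at this
  have hne : ¬ (-n = n) := by omega
  simp [hne] at this

lemma dlt_dvd_T_sub (n : ℤ) : dlt ∣ T n - T (-n) := by
  obtain ⟨m, rfl | rfl⟩ := n.eq_nat_or_neg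
  · cases m with
    | zero => simp
    | succ k =>
      exact ⟨su2Char k, by rw [dlt_mul_char k]; push_cast; ring_nf⟩
  · cases m with
    | zero => simp
    | succ k =>
      refine ⟨-su2Char k, ?_⟩
      have := dlt_mul_char k
      push_cast
      rw [mul_neg, this]
      push_cast
      ring_nf

lemma dlt_dvd (f : LaurentPolynomial ℤ) : dlt ∣ f - invert f := by
  induction f using LaurentPolynomial.induction_on' with
  | add p q hp hq =>
    have h1 : p + q - invert (p + q) = (p - invert p) + (q - invert q) := by
      rw [map_add]; ring
    rw [h1]; exact dvd_add hp hq
  | C_mul_T n a =>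
    rw [map_mul, invert_C, invert_T, ← mul_sub]
    exact (dlt_dvd_T_sub n).mul_left _

noncomputable def qpart (f : LaurentPolynomial ℤ) : LaurentPolynomial ℤ :=
  (dlt_dvd f).choose

lemma qpart_spec (f : LaurentPolynomial ℤ) : f - invert f = dlt * qpart f :=
  (dlt_dvd f).choose_spec

lemma qpart_eq {f q : LaurentPolynomial ℤ} (h : f - invert f = dlt * q) : qpart f = q :=
  mul_left_cancel₀ dlt_ne_zero ((qpart_spec f).symm.trans h)

lemma invert_qpart (f : LaurentPolynomial ℤ) : invert (qpart f) = qpart f := by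
  have h := congrArg invert (qpart_spec f)
  rw [map_sub, map_mul, involutive_invert f] at h
  have hd : invert dlt = -dlt := by simp [dlt]
  rw [hd] at h
  have h2 : f - invert f = dlt * invert (qpart f) := by
    have := congrArg Neg.neg h
    rw [neg_sub] at this
    rw [this]; ring
  exact (qpart_eq h2).symm

lemma qpart_mem (f : LaurentPolynomial ℤ) : qpart f ∈ weylInvariants :=
  mem_weylInvariants_iff.mpr (invert_qpart f)

lemma qpart_add (f g : LaurentPolynomial ℤ) : qpart (f + g) = qpart f + qpart g :=
  qpart_eq (by rw [map_add, mul_add, ← qpart_spec, ← qpart_spec]; ring)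

lemma qpart_smul (c : weylInvariants) (f : LaurentPolynomial ℤ) :
    qpart ((c : LaurentPolynomial ℤ) * f) = (c : LaurentPolynomial ℤ) * qpart f :=
  qpart_eq (by
    rw [map_mul, mem_weylInvariants_iff.mp c.2, ← mul_sub, qpart_spec f]; ring)

lemma invert_char (k : ℕ) : invert (su2Char k) = su2Char k := by
  rw [su2Char, map_sum]
  simp_rw [invert_T]
  rw [← Finset.sum_range_reflect (fun j : ℕ => (T (-((k : ℤ) - 2 * j)) : LaurentPolynomial ℤ))
    (k + 1)]
  refine Finset.sum_congr rfl fun j hj => ?_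
  have hj' : j ≤ k := Nat.lt_succ_iff.mp (Finset.mem_range.mp hj)
  congr 1
  have : ((k + 1 - 1 - j : ℕ) : ℤ) = (k : ℤ) - j := by omega
  rw [this]
  ring

lemma char_mem (k : ℕ) : su2Char k ∈ weylInvariants :=
  mem_weylInvariants_iff.mpr (invert_char k)

set_option maxHeartbeats 1600000 in
noncomputable def piMap (x : weylInvariants) :
    LaurentPolynomial ℤ →ₗ[weylInvariants]
      (weylInvariants ⧸ Ideal.span {x}) where
  toFun f := Submodule.Quotient.mk (⟨qpart f, qpart_mem f⟩ : weylInvariants)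
  map_add' f g := by
    show Submodule.Quotient.mk _ = Submodule.Quotient.mk _ + Submodule.Quotient.mk _
    rw [← Submodule.Quotient.mk_add]
    exact congrArg _ (Subtype.ext (qpart_add f g))
  map_smul' c f := by
    show Submodule.Quotient.mk _ = c • Submodule.Quotient.mk _
    rw [← Submodule.Quotient.mk_smul]
    refine congrArg _ (Subtype.ext ?_)
    show qpart (c • f) = ((c • (⟨qpart f, qpart_mem f⟩ : weylInvariants) :
        weylInvariants) : LaurentPolynomial ℤ)
    have h1 : c • f = (c : LaurentPolynomial ℤ) * f := rfl
    have h2 : ((c • (⟨qpart f, qpart_mem f⟩ : weylInvariants) :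
        weylInvariants) : LaurentPolynomial ℤ)
        = (c : LaurentPolynomial ℤ) * qpart f := rfl
    rw [h1, h2, qpart_smul]

lemma piMap_apply (x : weylInvariants) (f : LaurentPolynomial ℤ) :
    piMap x f = Submodule.Quotient.mk (⟨qpart f, qpart_mem f⟩ : weylInvariants) := rfl

set_option maxHeartbeats 1600000 in
lemma piMap_surjective (x : weylInvariants) : Function.Surjective (piMap x) := by
  intro y
  obtain ⟨r, rfl⟩ := Submodule.Quotient.mk_surjective _ y
  refine ⟨T 1 * (r : LaurentPolynomial ℤ), ?_⟩
  rw [piMap_apply]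
  refine congrArg _ (Subtype.ext ?_)
  show qpart (T 1 * (r : LaurentPolynomial ℤ)) = (r : LaurentPolynomial ℤ)
  refine qpart_eq ?_
  rw [map_mul, invert_T, mem_weylInvariants_iff.mp r.2, dlt, sub_mul]


/-- Mayer–Vietoris computation of `K^τ_{SU(2)}(SU(2))` at level `n ≥ 2`:
regarding `R(T) = ℤ[L,L⁻¹]` as a module over `R = ℤ[L,L⁻¹]^W`, the `R`-linear
map `R² → R(T)`, `(a,b) ↦ a - Lⁿ b`, is injective with cokernel isomorphic to
`R/(ρ_{n-1})`. -/
theorem mayer_vietoris_SU2 (n : ℕ) (hn : 2 ≤ n) :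
    ∃ hρ : su2Char (n - 1) ∈ weylInvariants,
      Function.Injective (mvMapSU2 n) ∧
      Nonempty
        ((LaurentPolynomial ℤ ⧸ LinearMap.range (mvMapSU2 n))
          ≃ₗ[weylInvariants]
            (weylInvariants ⧸
              Ideal.span {(⟨su2Char (n - 1), hρ⟩ : weylInvariants)})) := by
  have hρ : su2Char (n - 1) ∈ weylInvariants := char_mem (n - 1)
  have hkey : dlt * su2Char (n - 1) = T (n : ℤ) - T (-(n : ℤ)) := by
    have h := dlt_mul_char (n - 1)
    have hc : ((n - 1 : ℕ) : ℤ) + 1 = (n : ℤ) := by omega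
    rw [hc] at h
    exact h
  have hTn : (T (n : ℤ) : LaurentPolynomial ℤ) - T (-(n : ℤ)) ≠ 0 :=
    T_sub_T_ne_zero (by omega)
  have hinj : Function.Injective (mvMapSU2 n) := by
    rw [← LinearMap.ker_eq_bot, LinearMap.ker_eq_bot']
    intro p hp
    have hp0 : (p.1 : LaurentPolynomial ℤ) - T (n : ℤ) * (p.2 : LaurentPolynomial ℤ) = 0 := hp
    have hp1 := congrArg invert hp0
    rw [map_sub, map_mul, invert_T, map_zero, mem_weylInvariants_iff.mp p.1.2,
      mem_weylInvariants_iff.mp p.2.2] at hp1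
    have hb : ((T (n : ℤ) : LaurentPolynomial ℤ) - T (-(n : ℤ)))
        * (p.2 : LaurentPolynomial ℤ) = 0 := by
      linear_combination hp1 - hp0
    have hb2 : (p.2 : LaurentPolynomial ℤ) = 0 := by
      rcases mul_eq_zero.mp hb with h | h
      · exact absurd h hTn
      · exact h
    have ha : (p.1 : LaurentPolynomial ℤ) = 0 := by
      rw [hb2] at hp0; simpa using hp0
    exact Prod.ext (Subtype.ext ha) (Subtype.ext hb2)
  refine ⟨hρ, hinj, ⟨?_⟩⟩
  have hker : LinearMap.range (mvMapSU2 n)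
      = LinearMap.ker (piMap ⟨su2Char (n - 1), hρ⟩) := by
    apply le_antisymm
    · rintro f ⟨⟨a, b⟩, rfl⟩
      rw [LinearMap.mem_ker]
      have hmv : mvMapSU2 n (a, b)
          = (a : LaurentPolynomial ℤ) - T (n : ℤ) * (b : LaurentPolynomial ℤ) := rfl
      have hq : qpart ((a : LaurentPolynomial ℤ) - T (n : ℤ) * (b : LaurentPolynomial ℤ))
          = -(su2Char (n - 1) * (b : LaurentPolynomial ℤ)) := by
        refine qpart_eq ?_
        rw [map_sub, map_mul, invert_T, mem_weylInvariants_iff.mp a.2,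
          mem_weylInvariants_iff.mp b.2]
        linear_combination (b : LaurentPolynomial ℤ) * hkey
      rw [hmv, piMap_apply, Submodule.Quotient.mk_eq_zero]
      have heq : (⟨qpart ((a : LaurentPolynomial ℤ)
            - T (n : ℤ) * (b : LaurentPolynomial ℤ)), qpart_mem _⟩ : weylInvariants)
          = -((⟨su2Char (n - 1), hρ⟩ : weylInvariants) * b) := Subtype.ext hq
      rw [heq]
      exact Ideal.mem_span_singleton.mpr ⟨-b, by ring⟩
    · intro f hf
      rw [LinearMap.mem_ker, piMap_apply, Submodule.Quotient.mk_eq_zero,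
        Ideal.mem_span_singleton] at hf
      obtain ⟨c, hc⟩ := hf
      have hc' : qpart f = su2Char (n - 1) * (c : LaurentPolynomial ℤ) :=
        congrArg Subtype.val hc
      have hspec := qpart_spec f
      rw [hc', ← mul_assoc, hkey] at hspec
      have ha : invert (f - T (n : ℤ) * (c : LaurentPolynomial ℤ))
          = f - T (n : ℤ) * (c : LaurentPolynomial ℤ) := by
        rw [map_sub, map_mul, invert_T, mem_weylInvariants_iff.mp c.2]
        linear_combination -hspec
      refine ⟨(⟨f - T (n : ℤ) * (c : LaurentPolynomial ℤ),
        mem_weylInvariants_iff.mpr ha⟩, -c), ?_⟩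
      show (f - T (n : ℤ) * (c : LaurentPolynomial ℤ))
          - T (n : ℤ) * ((-c : weylInvariants) : LaurentPolynomial ℤ) = f
      push_cast
      ring
  exact (Submodule.quotEquivOfEq _ _ hker).trans
    (LinearMap.quotKerEquivOfSurjective _ (piMap_surjective _))
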